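/- For every good encoding ⟦·⟧ from π_mix into π_a and P ≔ (ā + a) | (b̄ + b.✓): every T ∈ π_a with ⟦P⟧ ⟹ T satisfies T ⇓̸. -/

import Mathlib

set_option maxHeartbeats 1000000

/-! # Common definitions: the π-calculus with mixed choice (π_mix) and the
asynchronous π-calculus (π_a), their structural congruence and reduction
semantics, symmetric networks and symmetric executions, contexts, and
Gorla's quality criteria for encodings. -/

/-- Names. -/
abbrev Name : Type := ℕ

/-- The single-name substitution `{m/n}` mapping `n` to `m` and every other
name to itself. -/
def rename (n m : Name) : Name → Name := fun k => if k = n then m else k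

/-! ## The asynchronous π-calculus π_a -/

/-- Processes of the asynchronous π-calculus π_a:
`P ::= (νn)P | P₁ | P₂ | !P | 0 | ȳ⟨z⟩ | y(x).P | [a=b]P | ✓`. -/
inductive PiA : Type
  | nil : PiA
  | res : Name → PiA → PiA
  | par : PiA → PiA → PiA
  | repl : PiA → PiA
  | out : Name → Name → PiA
  | inp : Name → Name → PiA → PiA
  | mtch : Name → Name → PiA → PiA
  | succ : PiA
  deriving DecidableEq

namespace PiA

/-- Application of a substitution to a π_a process. -/
def subst (σ : Name → Name) : PiA → PiA
  | nil => nil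
  | res n P => res (σ n) (subst σ P)
  | par P Q => par (subst σ P) (subst σ Q)
  | repl P => repl (subst σ P)
  | out y z => out (σ y) (σ z)
  | inp y x P => inp (σ y) (σ x) (subst σ P)
  | mtch a b P => mtch (σ a) (σ b) (subst σ P)
  | succ => succ

/-- All names of a π_a process. -/
def names : PiA → Finset Name
  | nil => ∅
  | res n P => insert n (names P)
  | par P Q => names P ∪ names Q
  | repl P => names P
  | out y z => {y, z}
  | inp y x P => insert y (insert x (names P))
  | mtch a b P => insert a (insert b (names P))
  | succ => ∅

/-- Free names of a π_a process. -/
def fn : PiA → Finset Name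
  | nil => ∅
  | res n P => (fn P).erase n
  | par P Q => fn P ∪ fn Q
  | repl P => fn P
  | out y z => {y, z}
  | inp y x P => insert y ((fn P).erase x)
  | mtch a b P => insert a (insert b (fn P))
  | succ => ∅

/-- Structural congruence of π_a: the least congruence containing
α-conversion and the standard structural axioms. -/
inductive Cong : PiA → PiA → Prop
  | refl (P) : Cong P P
  | symm {P Q} : Cong P Q → Cong Q P
  | trans {P Q R} : Cong P Q → Cong Q R → Cong P R
  | resC (n) {P Q} : Cong P Q → Cong (res n P) (res n Q)
  | parC {P P' Q Q'} : Cong P P' → Cong Q Q' → Cong (par P Q) (par P' Q')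
  | replC {P Q} : Cong P Q → Cong (repl P) (repl Q)
  | inpC (y x) {P Q} : Cong P Q → Cong (inp y x P) (inp y x Q)
  | mtchC (a b) {P Q} : Cong P Q → Cong (mtch a b P) (mtch a b Q)
  | alphaRes {n m : Name} {P} : m ∉ names P →
      Cong (res n P) (res m (subst (rename n m) P))
  | alphaInp {y x x' : Name} {P} : x' ∉ names P →
      Cong (inp y x P) (inp y x' (subst (rename x x') P))
  | parNil (P) : Cong (par P nil) P
  | parComm (P Q) : Cong (par P Q) (par Q P)
  | parAssoc (P Q R) : Cong (par P (par Q R)) (par (par P Q) R)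
  | mtchId (a : Name) (P) : Cong (mtch a a P) P
  | replUnfold (P) : Cong (repl P) (par P (repl P))
  | resNil (n : Name) : Cong (res n nil) nil
  | resSwap (n m : Name) (P) : Cong (res n (res m P)) (res m (res n P))
  | resPar {n : Name} {P} (Q) : n ∉ fn P →
      Cong (par P (res n Q)) (res n (par P Q))

/-- The reduction relation ⟼ of π_a. -/
inductive Step : PiA → PiA → Prop
  | com (y x z : Name) (P) :
      Step (par (inp y x P) (out y z)) (subst (rename x z) P)
  | parS {P P'} (Q) : Step P P' → Step (par P Q) (par P' Q)
  | resS (n : Name) {P P'} : Step P P' → Step (res n P) (res n P')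
  | congS {P P' Q Q'} : Cong P P' → Step P' Q' → Cong Q' Q → Step P Q

/-- The reflexive-transitive closure ⟹ of reduction in π_a. -/
abbrev Steps : PiA → PiA → Prop := Relation.ReflTransGen Step

/-- `P` contains a top-level unguarded occurrence of ✓, i.e. `P ≡ P'' | ✓`. -/
def HasTopSuccess (P : PiA) : Prop := ∃ P'', Cong P (par P'' succ)

/-- `P` may lead to success: `P⇓`. -/
def May (P : PiA) : Prop := ∃ P', Steps P P' ∧ HasTopSuccess P'

/-- `P ⟼^ω`: `P` has an infinite sequence of reduction steps. -/
def Diverges (P : PiA) : Prop :=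
  ∃ seq : ℕ → PiA, seq 0 = P ∧ ∀ i, Step (seq i) (seq (i + 1))

end PiA

/-! ## Networks and symmetric executions in π_a -/

/-- The parallel composition `P₁ | … | Pₙ` of a list of processes. -/
def parList : List PiA → PiA
  | [] => PiA.nil
  | [P] => P
  | P :: Q :: rest => PiA.par P (parList (Q :: rest))

/-- The restriction `(νx̃)P` of a process by a sequence of names. -/
def resList : List Name → PiA → PiA
  | [], P => P
  | n :: ns, P => PiA.res n (resList ns P)

/-- `P` is a symmetric network of degree `n`: `P = (νx̃)(P₁ | … | Pₙ)` where
`Pᵢ = σ^(i-1)(P₁)` for a symmetry relation `σ` with `σⁿ = id`. -/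
def SymNetwork (n : ℕ) (P : PiA) : Prop :=
  ∃ (xs : List Name) (Ps : List PiA) (σ : Name → Name),
    Ps.length = n ∧ σ^[n] = id ∧
    (∀ i < n, Ps.getD i PiA.nil = PiA.subst (σ^[i]) (Ps.getD 0 PiA.nil)) ∧
    P = resList xs (parList Ps)

/-- `seq` (of length `len`, `none` meaning infinite) is a symmetric execution
of degree `n`: it starts at a symmetric network of degree `n`, returns to a
symmetric network of degree `n` after every `n`-th step, and is either
infinite or terminates in a symmetric network of degree `n`. -/
def IsSymExecution (n : ℕ) (seq : ℕ → PiA) (len : Option ℕ) : Prop :=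
  SymNetwork n (seq 0) ∧
  match len with
  | none =>
      (∀ i, PiA.Step (seq i) (seq (i + 1))) ∧
      (∀ k, SymNetwork n (seq (n * k)))
  | some m =>
      (∀ i < m, PiA.Step (seq i) (seq (i + 1))) ∧
      (∀ T, ¬ PiA.Step (seq m) T) ∧
      (∀ k, n * k ≤ m → SymNetwork n (seq (n * k))) ∧
      SymNetwork n (seq m)

/-! ## The π-calculus with mixed choice π_mix -/

/-- Prefixes (guards) `μ ::= y(x) | ȳ⟨z⟩`. -/
inductive Guard : Type
  | inp : Name → Name → Guard
  | out : Name → Name → Guard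
  deriving DecidableEq

/-- Application of a substitution to a guard. -/
def Guard.subst (σ : Name → Name) : Guard → Guard
  | .inp y x => .inp (σ y) (σ x)
  | .out y z => .out (σ y) (σ z)

/-- Processes of π_mix:
`P ::= (νn)P | P₁ | P₂ | !P | Σ_{i∈I} μᵢ.Pᵢ | ✓`; `0` is the empty sum. -/
inductive PiM : Type
  | res : Name → PiM → PiM
  | par : PiM → PiM → PiM
  | repl : PiM → PiM
  | sum : List (Guard × PiM) → PiM
  | succ : PiM

/-- The empty sum `0` of π_mix. -/
def zeroM : PiM := .sum []

mutual
  /-- Application of a substitution to a π_mix process. -/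
  def substM (σ : Name → Name) : PiM → PiM
    | .res n P => .res (σ n) (substM σ P)
    | .par P Q => .par (substM σ P) (substM σ Q)
    | .repl P => .repl (substM σ P)
    | .sum gs => .sum (substSummands σ gs)
    | .succ => .succ
  /-- Application of a substitution to a list of summands. -/
  def substSummands (σ : Name → Name) :
      List (Guard × PiM) → List (Guard × PiM)
    | [] => []
    | (g, P) :: rest => (g.subst σ, substM σ P) :: substSummands σ rest
end

mutual
  /-- All names of a π_mix process. -/
  def namesM : PiM → Finset Name
    | .res n P => insert n (namesM P)
    | .par P Q => namesM P ∪ namesM Q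
    | .repl P => namesM P
    | .sum gs => namesSummands gs
    | .succ => ∅
  /-- All names of a list of summands. -/
  def namesSummands : List (Guard × PiM) → Finset Name
    | [] => ∅
    | (.inp y x, P) :: rest =>
        insert y (insert x (namesM P)) ∪ namesSummands rest
    | (.out y z, P) :: rest =>
        insert y (insert z (namesM P)) ∪ namesSummands rest
end

mutual
  /-- Free names of a π_mix process. -/
  def fnM : PiM → Finset Name
    | .res n P => (fnM P).erase n
    | .par P Q => fnM P ∪ fnM Q
    | .repl P => fnM P
    | .sum gs => fnSummands gs
    | .succ => ∅
  /-- Free names of a list of summands. -/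
  def fnSummands : List (Guard × PiM) → Finset Name
    | [] => ∅
    | (.inp y x, P) :: rest => insert y ((fnM P).erase x) ∪ fnSummands rest
    | (.out y z, P) :: rest => insert y (insert z (fnM P)) ∪ fnSummands rest
end

/-- Structural congruence of π_mix. -/
inductive CongM : PiM → PiM → Prop
  | refl (P) : CongM P P
  | symm {P Q} : CongM P Q → CongM Q P
  | trans {P Q R} : CongM P Q → CongM Q R → CongM P R
  | resC (n : Name) {P Q} : CongM P Q → CongM (.res n P) (.res n Q)
  | parC {P P' Q Q'} : CongM P P' → CongM Q Q' → CongM (.par P Q) (.par P' Q')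
  | replC {P Q} : CongM P Q → CongM (.repl P) (.repl Q)
  | alphaRes {n m : Name} {P} : m ∉ namesM P →
      CongM (.res n P) (.res m (substM (rename n m) P))
  | alphaInp {gs₁ gs₂ : List (Guard × PiM)} {y x x' : Name} {P} :
      x' ∉ namesM P →
      CongM (.sum (gs₁ ++ (Guard.inp y x, P) :: gs₂))
            (.sum (gs₁ ++ (Guard.inp y x', substM (rename x x') P) :: gs₂))
  | sumPerm {gs gs' : List (Guard × PiM)} : gs.Perm gs' →
      CongM (.sum gs) (.sum gs')
  | parNil (P) : CongM (.par P zeroM) P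
  | parComm (P Q) : CongM (.par P Q) (.par Q P)
  | parAssoc (P Q R) : CongM (.par P (.par Q R)) (.par (.par P Q) R)
  | replUnfold (P) : CongM (.repl P) (.par P (.repl P))
  | resNil (n : Name) : CongM (.res n zeroM) zeroM
  | resSwap (n m : Name) (P) : CongM (.res n (.res m P)) (.res m (.res n P))
  | resPar {n : Name} {P} (Q) : n ∉ fnM P →
      CongM (.par P (.res n Q)) (.res n (.par P Q))

/-- The reduction relation ⟼ of π_mix:
`(…+ y(x).P +…) | (…+ ȳ⟨z⟩.Q +…) ⟼ P{z/x} | Q`, closed under parallel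
composition, restriction and structural congruence. -/
inductive StepM : PiM → PiM → Prop
  | com {gs₁ gs₂ : List (Guard × PiM)} {y x z : Name} {P Q : PiM} :
      (Guard.inp y x, P) ∈ gs₁ → (Guard.out y z, Q) ∈ gs₂ →
      StepM (.par (.sum gs₁) (.sum gs₂)) (.par (substM (rename x z) P) Q)
  | parS {P P'} (Q) : StepM P P' → StepM (.par P Q) (.par P' Q)
  | resS (n : Name) {P P'} : StepM P P' → StepM (.res n P) (.res n P')
  | congS {P P' Q Q'} : CongM P P' → StepM P' Q' → CongM Q' Q → StepM P Q

/-- The reflexive-transitive closure ⟹ of reduction in π_mix. -/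
abbrev StepsM : PiM → PiM → Prop := Relation.ReflTransGen StepM

/-- `S` contains a top-level unguarded occurrence of ✓, i.e. `S ≡ S'' | ✓`. -/
def HasTopSuccessM (S : PiM) : Prop := ∃ S'', CongM S (.par S'' .succ)

/-- `S` may lead to success: `S⇓`. -/
def MayM (S : PiM) : Prop := ∃ S', StepsM S S' ∧ HasTopSuccessM S'

/-- `S ⟼^ω`: `S` has an infinite sequence of reduction steps. -/
def DivergesM (S : PiM) : Prop :=
  ∃ seq : ℕ → PiM, seq 0 = S ∧ ∀ i, StepM (seq i) (seq (i + 1))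

/-- `seq` (of length `len`, `none` meaning infinite) is a maximal execution:
it is either infinite or terminates in a process with no reduction step. -/
def IsMaxExecutionM (seq : ℕ → PiM) (len : Option ℕ) : Prop :=
  match len with
  | none => ∀ i, StepM (seq i) (seq (i + 1))
  | some m => (∀ i < m, StepM (seq i) (seq (i + 1))) ∧ ∀ T, ¬ StepM (seq m) T

/-! ## α-equivalence on π_a -/

/-- α-conversion ≡α on π_a: the least congruence allowing renaming of
bound names (avoiding name clashes). -/
inductive AlphaA : PiA → PiA → Prop
  | refl (P) : AlphaA P P
  | symm {P Q} : AlphaA P Q → AlphaA Q P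
  | trans {P Q R} : AlphaA P Q → AlphaA Q R → AlphaA P R
  | resC (n : Name) {P Q} : AlphaA P Q → AlphaA (.res n P) (.res n Q)
  | parC {P P' Q Q'} : AlphaA P P' → AlphaA Q Q' → AlphaA (.par P Q) (.par P' Q')
  | replC {P Q} : AlphaA P Q → AlphaA (.repl P) (.repl Q)
  | inpC (y x : Name) {P Q} : AlphaA P Q → AlphaA (.inp y x P) (.inp y x Q)
  | mtchC (a b : Name) {P Q} : AlphaA P Q → AlphaA (.mtch a b P) (.mtch a b Q)
  | alphaRes {n m : Name} {P} : m ∉ PiA.names P →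
      AlphaA (.res n P) (.res m (PiA.subst (rename n m) P))
  | alphaInp {y x x' : Name} {P} : x' ∉ PiA.names P →
      AlphaA (.inp y x P) (.inp y x' (PiA.subst (rename x x') P))

/-! ## Contexts of π_a -/

/-- `k`-ary contexts of π_a: π_a-terms with holes `·ᵢ`, `i : Fin k`. -/
inductive CtxA : ℕ → Type
  | hole {k} : Fin k → CtxA k
  | nil {k} : CtxA k
  | res {k} : Name → CtxA k → CtxA k
  | par {k} : CtxA k → CtxA k → CtxA k
  | repl {k} : CtxA k → CtxA k
  | out {k} : Name → Name → CtxA k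
  | inp {k} : Name → Name → CtxA k → CtxA k
  | mtch {k} : Name → Name → CtxA k → CtxA k
  | succ {k} : CtxA k

/-- Filling the holes of a context with processes. -/
def CtxA.fill {k : ℕ} : CtxA k → (Fin k → PiA) → PiA
  | .hole i, f => f i
  | .nil, _ => .nil
  | .res n C, f => .res n (C.fill f)
  | .par C D, f => .par (C.fill f) (D.fill f)
  | .repl C, f => .repl (C.fill f)
  | .out y z, _ => .out y z
  | .inp y x C, f => .inp y x (C.fill f)
  | .mtch a b C, f => .mtch a b (C.fill f)
  | .succ, _ => .succ

/-- The number of occurrences of hole `·ᵢ` in a context. -/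
def CtxA.holeCount {k : ℕ} : CtxA k → Fin k → ℕ
  | .hole i, j => if i = j then 1 else 0
  | .nil, _ => 0
  | .res _ C, j => C.holeCount j
  | .par C D, j => C.holeCount j + D.holeCount j
  | .repl C, j => C.holeCount j
  | .out _ _, _ => 0
  | .inp _ _ C, j => C.holeCount j
  | .mtch _ _ C, j => C.holeCount j
  | .succ, _ => 0

/-! ## Operators of π_mix -/

/-- The operators of π_mix: restriction, parallel composition, replication,
a sum operator for every finite list of prefixes, and ✓. -/
inductive MixOp : Type
  | res : Name → MixOp
  | par : MixOp
  | repl : MixOp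
  | sum : List Guard → MixOp
  | succ : MixOp

/-- The arity of a π_mix operator. -/
def MixOp.arity : MixOp → ℕ
  | .res _ => 1
  | .par => 2
  | .repl => 1
  | .sum gs => gs.length
  | .succ => 0

/-- Applying a π_mix operator to arguments. -/
def MixOp.apply : (op : MixOp) → (Fin op.arity → PiM) → PiM
  | .res n, f => .res n (f ⟨0, by simp [MixOp.arity]⟩)
  | .par, f => .par (f ⟨0, by simp [MixOp.arity]⟩) (f ⟨1, by simp [MixOp.arity]⟩)
  | .repl, f => .repl (f ⟨0, by simp [MixOp.arity]⟩)
  | .sum gs, f => .sum (List.ofFn fun i : Fin gs.length => (gs.get i, f i))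
  | .succ, _ => .succ

/-! ## Quality criteria for encodings (Gorla) -/

/-- Criterion 1 (Compositionality): for every operator `op` of π_mix and
every set of names `N` there is a context `C_op^N` such that
`⟦op(S₁,…,S_k)⟧ = C_op^N(⟦S₁⟧,…,⟦S_k⟧)` whenever `fn(S₁) ∪ … ∪ fn(S_k) = N`. -/
def Compositional (enc : PiM → PiA) : Prop :=
  ∀ (op : MixOp) (N : Finset Name), ∃ C : CtxA op.arity,
    ∀ f : Fin op.arity → PiM,
      (Finset.univ.biUnion fun i => fnM (f i)) = N →
      enc (op.apply f) = C.fill (fun i => enc (f i))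

/-- A renaming policy keeps distinct names distinct:
`n ≠ m` implies `φ(n) ∩ φ(m) = ∅`. -/
def PolicyOK (φ : Name → List Name) : Prop :=
  ∀ n m : Name, n ≠ m → ∀ x ∈ φ n, x ∉ φ m

/-- Criterion 2 (Name invariance) w.r.t. a renaming policy `φ`:
`⟦σ(S)⟧ ≡α σ'(⟦S⟧)` if `σ` is injective and `⟦σ(S)⟧ ≍ σ'(⟦S⟧)` otherwise,
where `σ'` is such that `φ(σ(a)) = σ'(φ(a))` for every name `a`. -/
def NameInvariant (enc : PiM → PiA) (equiv : PiA → PiA → Prop)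
    (φ : Name → List Name) : Prop :=
  ∀ (S : PiM) (σ : Name → Name), ∃ σ' : Name → Name,
    (∀ a : Name, φ (σ a) = (φ a).map σ') ∧
    (Function.Injective σ →
      AlphaA (enc (substM σ S)) (PiA.subst σ' (enc S))) ∧
    (¬ Function.Injective σ →
      equiv (enc (substM σ S)) (PiA.subst σ' (enc S)))

/-- Operational completeness: `S ⟹ S'` implies `⟦S⟧ ⟹ ≍ ⟦S'⟧`. -/
def OperationallyComplete (enc : PiM → PiA) (equiv : PiA → PiA → Prop) : Prop :=
  ∀ S S', StepsM S S' → ∃ T, PiA.Steps (enc S) T ∧ equiv T (enc S')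

/-- Operational soundness: `⟦S⟧ ⟹ T` implies `S ⟹ S'` and `T ⟹ ≍ ⟦S'⟧`
for some `S'`. -/
def OperationallySound (enc : PiM → PiA) (equiv : PiA → PiA → Prop) : Prop :=
  ∀ S T, PiA.Steps (enc S) T →
    ∃ S' T', StepsM S S' ∧ PiA.Steps T T' ∧ equiv T' (enc S')

/-- Criterion 4 (Divergence reflection): `⟦S⟧ ⟼^ω` implies `S ⟼^ω`. -/
def DivergenceReflecting (enc : PiM → PiA) : Prop :=
  ∀ S, PiA.Diverges (enc S) → DivergesM S

/-- Criterion 5 (Success sensitiveness): `S⇓` iff `⟦S⟧⇓`. -/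
def SuccessSensitive (enc : PiM → PiA) : Prop :=
  ∀ S, MayM S ↔ PiA.May (enc S)

/-- `≍` is success respecting: `P⇓` and `Q⇓̸` imply `P ≭ Q`. -/
def SuccessRespecting (equiv : PiA → PiA → Prop) : Prop :=
  ∀ T₁ T₂, PiA.May T₁ → ¬ PiA.May T₂ → ¬ equiv T₁ T₂

/-- A good encoding from π_mix into π_a w.r.t. a success-respecting
behavioural equivalence `≍` on π_a and a renaming policy `φ`: it is
compositional, name invariant, operationally corresponding, divergence
reflecting and success sensitive. -/
structure GoodEncoding (enc : PiM → PiA) (equiv : PiA → PiA → Prop)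
    (φ : Name → List Name) : Prop where
  equivEquivalence : Equivalence equiv
  successRespecting : SuccessRespecting equiv
  policyOK : PolicyOK φ
  compositional : Compositional enc
  nameInvariant : NameInvariant enc equiv φ
  complete : OperationallyComplete enc equiv
  sound : OperationallySound enc equiv
  divergenceReflecting : DivergenceReflecting enc
  successSensitive : SuccessSensitive enc

/-! ## The concrete counterexample terms (prefixes CCS-like, objects omitted) -/

/-- The sum `ā + a`. -/
def aSum (a : Name) : PiM := .sum [(Guard.out a a, zeroM), (Guard.inp a a, zeroM)]

/-- The sum `b̄ + b.✓`. -/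
def bSum (b : Name) : PiM := .sum [(Guard.out b b, zeroM), (Guard.inp b b, .succ)]

/-- `P ≔ (ā + a) | (b̄ + b.✓)`. -/
def Pterm (a b : Name) : PiM := .par (aSum a) (bSum b)

/-- `Q ≔ P | P`. -/
def Qterm (a b : Name) : PiM := .par (Pterm a b) (Pterm a b)

/-- The sum `ā + b + b.✓`. -/
def rSum1 (a b : Name) : PiM :=
  .sum [(Guard.out a a, zeroM), (Guard.inp b b, zeroM), (Guard.inp b b, .succ)]

/-- The sum `b̄ + a + a.✓`. -/
def rSum2 (a b : Name) : PiM :=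
  .sum [(Guard.out b b, zeroM), (Guard.inp a a, zeroM), (Guard.inp a a, .succ)]

/-- `R ≔ (ā + b + b.✓) | (b̄ + a + a.✓)`. -/
def Rterm (a b : Name) : PiM := .par (rSum1 a b) (rSum2 a b)


/-! ## Auxiliary development for Statement 6 -/

section Aux6

/-- Guard atoms: polarity (true = output) and channel (`none` = hidden). -/
abbrev GAtom := Bool × Option Name
/-- Atoms: `none` = an unguarded ✓, `some G` = an unguarded nonempty sum
with guard-atom multiset `G`. -/
abbrev Atom := Option (Multiset GAtom)

def hideC (n : Name) : Option Name → Option Name := fun c => if c = some n then none else c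
def hideG (n : Name) (g : GAtom) : GAtom := (g.1, hideC n g.2)
def hideA (n : Name) : Atom → Atom := Option.map (Multiset.map (hideG n))
def hideM (n : Name) (M : Multiset Atom) : Multiset Atom := M.map (hideA n)

def sCh (σ : Name → Name) : Option Name → Option Name := Option.map σ
def sGd (σ : Name → Name) (g : GAtom) : GAtom := (g.1, sCh σ g.2)
def sAt (σ : Name → Name) : Atom → Atom := Option.map (Multiset.map (sGd σ))
def sMu (σ : Name → Name) (M : Multiset Atom) : Multiset Atom := M.map (sAt σ)

def gch : Guard → GAtom
  | .inp y _ => (false, some y)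
  | .out y _ => (true, some y)

def gmult : List (Guard × PiM) → Multiset GAtom
  | [] => 0
  | (g, _) :: rest => gch g ::ₘ gmult rest

/-- The semantic fingerprint of a π_mix process: the multiset of its
top-level unguarded atoms. -/
def sem : PiM → Multiset Atom
  | .res n P => hideM n (sem P)
  | .par P Q => sem P + sem Q
  | .repl _ => 0
  | .sum [] => 0
  | .sum (g :: gs) => {some (gmult (g :: gs))}
  | .succ => {none}

theorem sem_sum_ne {gs : List (Guard × PiM)} (h : gs ≠ []) :
    sem (.sum gs) = {some (gmult gs)} := by
  cases gs with
  | nil => exact absurd rfl h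
  | cons g rest => rfl

/-- No replication at unguarded position. -/
def nrP : PiM → Bool
  | .res _ P => nrP P
  | .par P Q => nrP P && nrP Q
  | .repl _ => false
  | .sum _ => true
  | .succ => true

theorem nr_subst (σ : Name → Name) : ∀ P, nrP (substM σ P) = nrP P
  | .res n P => by simp [substM, nrP, nr_subst σ P]
  | .par P Q => by simp [substM, nrP, nr_subst σ P, nr_subst σ Q]
  | .repl P => by simp [substM, nrP]
  | .sum gs => by simp [substM, nrP]
  | .succ => by simp [substM, nrP]

theorem substSummands_nil (σ : Name → Name) :
    ∀ gs : List (Guard × PiM), substSummands σ gs = [] ↔ gs = []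
  | [] => by simp [substSummands]
  | (g, P) :: rest => by simp [substSummands]

theorem gmult_subst (σ : Name → Name) :
    ∀ gs, gmult (substSummands σ gs) = (gmult gs).map (sGd σ)
  | [] => by simp [substSummands, gmult]
  | (g, P) :: rest => by
      cases g <;>
        simp [substSummands, gmult, gmult_subst σ rest, gch, Guard.subst, sGd, sCh]

theorem chan_gmult_names : ∀ (gs : List (Guard × PiM)) (pol : Bool) (c : Name),
    (pol, some c) ∈ gmult gs → c ∈ namesSummands gs
  | [], pol, c => by simp [gmult]
  | (g, P) :: rest, pol, c => by
      intro h
      rw [gmult, Multiset.mem_cons] at h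
      rcases h with h | h
      · cases g with
        | inp y x =>
            simp only [gch, Prod.mk.injEq, Option.some.injEq] at h
            simp [namesSummands, h.2]
        | out y z =>
            simp only [gch, Prod.mk.injEq, Option.some.injEq] at h
            simp [namesSummands, h.2]
      · have := chan_gmult_names rest pol c h
        cases g <;> simp [namesSummands, this]

theorem chan_gmult_fn : ∀ (gs : List (Guard × PiM)) (pol : Bool) (c : Name),
    (pol, some c) ∈ gmult gs → c ∈ fnSummands gs
  | [], pol, c => by simp [gmult]
  | (g, P) :: rest, pol, c => by
      intro h
      rw [gmult, Multiset.mem_cons] at h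
      rcases h with h | h
      · cases g with
        | inp y x =>
            simp only [gch, Prod.mk.injEq, Option.some.injEq] at h
            simp [fnSummands, h.2]
        | out y z =>
            simp only [gch, Prod.mk.injEq, Option.some.injEq] at h
            simp [fnSummands, h.2]
      · have := chan_gmult_fn rest pol c h
        cases g <;> simp [fnSummands, this]

theorem sem_chan_names : ∀ (P : PiM) (G : Multiset GAtom) (pol : Bool) (c : Name),
    some G ∈ sem P → (pol, some c) ∈ G → c ∈ namesM P
  | .res n P, G, pol, c => by
      intro hG hc
      simp only [sem, hideM, Multiset.mem_map] at hG
      obtain ⟨A, hA, hmap⟩ := hG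
      cases A with
      | none => simp [hideA] at hmap
      | some G' =>
          simp only [hideA, Option.map_some, Option.some.injEq] at hmap
          subst hmap
          obtain ⟨g, hg, hgeq⟩ := Multiset.mem_map.mp hc
          obtain ⟨pol', c'⟩ := g
          simp only [hideG, Prod.mk.injEq] at hgeq
          have hg2 := hgeq.2
          unfold hideC at hg2
          have hc' : c' = some c := by
            by_cases h : c' = some n
            · rw [if_pos h] at hg2; exact nomatch hg2
            · rwa [if_neg h] at hg2
          subst hc'
          have := sem_chan_names P G' pol' c hA hg
          simp [namesM, this]
  | .par P Q, G, pol, c => by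
      intro hG hc
      simp only [sem, Multiset.mem_add] at hG
      rcases hG with hG | hG
      · have := sem_chan_names P G pol c hG hc
        simp [namesM, this]
      · have := sem_chan_names Q G pol c hG hc
        simp [namesM, this]
  | .repl P, G, pol, c => by intro hG; simp [sem] at hG
  | .sum gs, G, pol, c => by
      intro hG hc
      by_cases h : gs = []
      · subst h; simp [sem] at hG
      · rw [sem_sum_ne h, Multiset.mem_singleton, Option.some.injEq] at hG
        subst hG
        have := chan_gmult_names gs pol c hc
        simpa [namesM] using this
  | .succ, G, pol, c => by intro hG; simp [sem] at hG

theorem sem_chan_fn : ∀ (P : PiM) (G : Multiset GAtom) (pol : Bool) (c : Name),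
    some G ∈ sem P → (pol, some c) ∈ G → c ∈ fnM P
  | .res n P, G, pol, c => by
      intro hG hc
      simp only [sem, hideM, Multiset.mem_map] at hG
      obtain ⟨A, hA, hmap⟩ := hG
      cases A with
      | none => simp [hideA] at hmap
      | some G' =>
          simp only [hideA, Option.map_some, Option.some.injEq] at hmap
          subst hmap
          obtain ⟨g, hg, hgeq⟩ := Multiset.mem_map.mp hc
          obtain ⟨pol', c'⟩ := g
          simp only [hideG, Prod.mk.injEq] at hgeq
          have hg2 := hgeq.2
          unfold hideC at hg2
          by_cases h : c' = some n
          · rw [if_pos h] at hg2; exact nomatch hg2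
          · rw [if_neg h] at hg2
            subst hg2
            have hcn : c ≠ n := fun hcn => h (by rw [hcn])
            have := sem_chan_fn P G' pol' c hA hg
            simp [fnM, Finset.mem_erase, hcn, this]
  | .par P Q, G, pol, c => by
      intro hG hc
      simp only [sem, Multiset.mem_add] at hG
      rcases hG with hG | hG
      · have := sem_chan_fn P G pol c hG hc
        simp [fnM, this]
      · have := sem_chan_fn Q G pol c hG hc
        simp [fnM, this]
  | .repl P, G, pol, c => by intro hG; simp [sem] at hG
  | .sum gs, G, pol, c => by
      intro hG hc
      by_cases h : gs = []
      · subst h; simp [sem] at hG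
      · rw [sem_sum_ne h, Multiset.mem_singleton, Option.some.injEq] at hG
        subst hG
        have := chan_gmult_fn gs pol c hc
        simpa [fnM] using this
  | .succ, G, pol, c => by intro hG; simp [sem] at hG

theorem hide_noop (n : Name) (P : PiM) (hn : n ∉ fnM P) : hideM n (sem P) = sem P := by
  have : ∀ A ∈ sem P, hideA n A = A := by
    intro A hA
    cases A with
    | none => rfl
    | some G =>
        simp only [hideA, Option.map_some, Option.some.injEq]
        have : ∀ g ∈ G, hideG n g = g := by
          intro g hg
          obtain ⟨pol, c⟩ := g
          cases c with
          | none => simp [hideG, hideC]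
          | some c' =>
              have hcn : c' ≠ n := by
                intro h
                exact hn (h ▸ sem_chan_fn P G pol c' hA hg)
              simp [hideG, hideC, hcn]
        calc Multiset.map (hideG n) G = Multiset.map id G :=
              Multiset.map_congr rfl (fun g hg => this g hg)
          _ = G := Multiset.map_id G
  calc hideM n (sem P) = Multiset.map id (sem P) :=
        Multiset.map_congr rfl this
    _ = sem P := Multiset.map_id _

theorem rename_eq_iff {n m c k : Name} (hc : c ≠ m) (hk : k ≠ m) :
    (rename n m c = rename n m k ↔ c = k) := by
  unfold rename
  constructor
  · intro h
    by_cases h1 : c = n <;> by_cases h2 : k = n <;> simp [h1, h2] at h ⊢ <;> tauto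
  · intro h; rw [h]

theorem sem_subst (n m : Name) : ∀ P : PiM, m ∉ namesM P →
    sem (substM (rename n m) P) = sMu (rename n m) (sem P)
  | .res k Q => by
      intro hm
      have hmQ : m ∉ namesM Q := by
        simp only [namesM, Finset.mem_insert] at hm; tauto
      have hmk : m ≠ k := by
        simp only [namesM, Finset.mem_insert] at hm; tauto
      show hideM (rename n m k) (sem (substM (rename n m) Q))
          = sMu (rename n m) (hideM k (sem Q))
      rw [sem_subst n m Q hmQ]
      unfold hideM sMu
      rw [Multiset.map_map, Multiset.map_map]
      apply Multiset.map_congr rfl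
      intro A hA
      cases A with
      | none => rfl
      | some G =>
          simp only [Function.comp_apply, hideA, sAt, Option.map_some,
            Option.some.injEq, Multiset.map_map]
          apply Multiset.map_congr rfl
          intro g hg
          obtain ⟨pol, c⟩ := g
          cases c with
          | none => simp [hideG, sGd, hideC, sCh]
          | some c' =>
              have hc' : c' ≠ m := by
                intro h
                exact hmQ (h ▸ sem_chan_names Q G pol c' hA hg)
              have hiff := rename_eq_iff (n := n) hc' (fun h => hmk h.symm)
              by_cases h : c' = k
              · simp [hideG, sGd, hideC, sCh, h]
              · have : rename n m c' ≠ rename n m k := fun hh => h (hiff.mp hh)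
                simp [hideG, sGd, hideC, sCh, h, this]
  | .par P Q => by
      intro hm
      simp only [namesM, Finset.mem_union, not_or] at hm
      show sem (substM (rename n m) P) + sem (substM (rename n m) Q)
          = sMu (rename n m) (sem P + sem Q)
      rw [sem_subst n m P hm.1, sem_subst n m Q hm.2]
      unfold sMu
      rw [Multiset.map_add]
  | .repl P => by intro _; simp [substM, sem, sMu]
  | .sum gs => by
      intro _
      show sem (.sum (substSummands (rename n m) gs)) = sMu (rename n m) (sem (.sum gs))
      by_cases h : gs = []
      · subst h; simp [substSummands, sem, sMu]
      · have h2 : substSummands (rename n m) gs ≠ [] := by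
          rw [Ne, substSummands_nil]; exact h
        rw [sem_sum_ne h, sem_sum_ne h2]
        simp only [sMu, Multiset.map_singleton, sAt, Option.map_some, gmult_subst]
  | .succ => by intro _; simp [substM, sem, sMu, sAt]

theorem hide_alpha (n m : Name) (P : PiM) (hm : m ∉ namesM P) :
    hideM n (sem P) = hideM m (sMu (rename n m) (sem P)) := by
  unfold hideM sMu
  rw [Multiset.map_map]
  apply Multiset.map_congr rfl
  intro A hA
  cases A with
  | none => rfl
  | some G =>
      simp only [Function.comp_apply, hideA, sAt, Option.map_some,
        Option.some.injEq, Multiset.map_map]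
      apply Multiset.map_congr rfl
      intro g hg
      obtain ⟨pol, c⟩ := g
      cases c with
      | none => simp [hideG, sGd, hideC, sCh]
      | some c' =>
          have hc' : c' ≠ m := by
            intro h
            exact hm (h ▸ sem_chan_names P G pol c' hA hg)
          by_cases h : c' = n
          · simp [hideG, sGd, hideC, sCh, h, rename]
          · simp [hideG, sGd, hideC, sCh, h, rename, hc']

theorem gmult_perm : ∀ {gs gs' : List (Guard × PiM)}, gs.Perm gs' → gmult gs = gmult gs' := by
  intro gs gs' h
  induction h with
  | nil => rfl
  | cons g _ ih => obtain ⟨gd, P⟩ := g; simp [gmult, ih]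
  | swap g g' l => obtain ⟨gd, P⟩ := g; obtain ⟨gd', P'⟩ := g'
                   simp [gmult, Multiset.cons_swap]
  | trans _ _ ih1 ih2 => rw [ih1, ih2]

theorem gmult_append : ∀ (gs₁ gs₂ : List (Guard × PiM)),
    gmult (gs₁ ++ gs₂) = gmult gs₁ + gmult gs₂
  | [], gs₂ => by simp [gmult]
  | (g, P) :: rest, gs₂ => by
      simp [gmult, gmult_append rest gs₂]

/-- Structural congruence preserves the `nrP` flag and, for `nrP`-processes,
the semantic fingerprint. -/
theorem cong_sem : ∀ {P Q : PiM}, CongM P Q →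
    (nrP P = nrP Q ∧ (nrP P = true → sem P = sem Q)) := by
  intro P Q h
  induction h with
  | refl P => exact ⟨rfl, fun _ => rfl⟩
  | symm _ ih =>
      exact ⟨ih.1.symm, fun hq => (ih.2 (ih.1.trans hq)).symm⟩
  | trans _ _ ih1 ih2 =>
      exact ⟨ih1.1.trans ih2.1, fun hp => (ih1.2 hp).trans (ih2.2 (ih1.1 ▸ hp))⟩
  | resC n _ ih =>
      exact ⟨by simp [nrP, ih.1], fun hp => by
        show hideM n _ = hideM n _
        rw [ih.2 hp]⟩
  | parC _ _ ih1 ih2 =>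
      refine ⟨by simp [nrP, ih1.1, ih2.1], fun hp => ?_⟩
      simp only [nrP, Bool.and_eq_true] at hp
      show sem _ + sem _ = sem _ + sem _
      rw [ih1.2 hp.1, ih2.2 hp.2]
  | replC _ ih => exact ⟨rfl, fun _ => rfl⟩
  | alphaRes hm =>
      refine ⟨by simp [nrP, nr_subst], fun _ => ?_⟩
      show hideM _ (sem _) = hideM _ (sem (substM _ _))
      rw [sem_subst _ _ _ hm]
      exact hide_alpha _ _ _ hm
  | @alphaInp gs₁ gs₂ y x x' P hm =>
      refine ⟨rfl, fun _ => ?_⟩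
      have h1 : (gs₁ ++ (Guard.inp y x, P) :: gs₂) ≠ [] := by simp
      have h2 : (gs₁ ++ (Guard.inp y x', substM (rename x x') P) :: gs₂) ≠ [] := by simp
      rw [sem_sum_ne h1, sem_sum_ne h2]
      simp only [gmult_append, gmult, gch]
  | @sumPerm gs gs' hperm =>
      refine ⟨rfl, fun _ => ?_⟩
      by_cases h : gs = []
      · subst h
        have h' : gs' = [] := hperm.symm.eq_nil
        subst h'
        rfl
      · have h' : gs' ≠ [] := fun hh => h ((hh ▸ hperm).eq_nil)
        rw [sem_sum_ne h, sem_sum_ne h', gmult_perm hperm]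
  | parNil P =>
      refine ⟨by simp [nrP, zeroM], fun _ => ?_⟩
      show sem P + sem zeroM = sem P
      simp [zeroM, sem]
  | parComm P Q => exact ⟨by simp [nrP, Bool.and_comm], fun _ => add_comm _ _⟩
  | parAssoc P Q R =>
      exact ⟨by simp [nrP, Bool.and_assoc], fun _ => (add_assoc _ _ _).symm⟩
  | replUnfold P =>
      exact ⟨by simp [nrP], fun hp => by simp [nrP] at hp⟩
  | resNil n =>
      refine ⟨rfl, fun _ => ?_⟩
      show hideM n (sem zeroM) = sem zeroM
      simp [zeroM, sem, hideM]
  | resSwap n m P =>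
      refine ⟨rfl, fun _ => ?_⟩
      show hideM n (hideM m (sem P)) = hideM m (hideM n (sem P))
      unfold hideM
      rw [Multiset.map_map, Multiset.map_map]
      apply Multiset.map_congr rfl
      intro A _
      cases A with
      | none => rfl
      | some G =>
          simp only [Function.comp_apply, hideA, Option.map_some,
            Option.some.injEq, Multiset.map_map]
          apply Multiset.map_congr rfl
          intro g _
          obtain ⟨pol, c⟩ := g
          cases c with
          | none => simp [hideG, hideC]
          | some c' =>
              by_cases h1 : c' = m <;> by_cases h2 : c' = n <;>
                simp [hideG, hideC, h1, h2] <;> split_ifs <;> simp_all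
  | @resPar n P Q hn =>
      refine ⟨by simp [nrP], fun _ => ?_⟩
      show sem P + hideM n (sem Q) = hideM n (sem P + sem Q)
      unfold hideM
      rw [Multiset.map_add]
      rw [show Multiset.map (hideA n) (sem P) = hideM n (sem P) from rfl,
        hide_noop n P hn]

/-- A fingerprint admits a communication. -/
def CanCom (M : Multiset Atom) : Prop :=
  ∃ (G₁ G₂ : Multiset GAtom) (c : Option Name),
    (some G₁ ::ₘ some G₂ ::ₘ 0) ≤ M ∧ (false, c) ∈ G₁ ∧ (true, c) ∈ G₂

theorem gch_mem_gmult : ∀ {gs : List (Guard × PiM)} {g : Guard} {P : PiM},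
    (g, P) ∈ gs → gch g ∈ gmult gs
  | [], g, P => by intro h; exact absurd h List.not_mem_nil
  | (g', P') :: rest, g, P => by
      intro h
      rcases List.mem_cons.mp h with h | h
      · rw [gmult]; cases h; exact Multiset.mem_cons_self _ _
      · rw [gmult]; exact Multiset.mem_cons_of_mem (gch_mem_gmult h)

theorem step_cancom : ∀ {S T : PiM}, StepM S T → nrP S = true → CanCom (sem S) := by
  intro S T h
  induction h with
  | @com gs₁ gs₂ y x z P Q h1 h2 =>
      intro _
      have hn1 : gs₁ ≠ [] := by rintro rfl; simp at h1
      have hn2 : gs₂ ≠ [] := by rintro rfl; simp at h2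
      refine ⟨gmult gs₁, gmult gs₂, some y, ?_, ?_, ?_⟩
      · show _ ≤ sem (.par (.sum gs₁) (.sum gs₂))
        show _ ≤ sem (.sum gs₁) + sem (.sum gs₂)
        rw [sem_sum_ne hn1, sem_sum_ne hn2]
        rw [show ({some (gmult gs₁)} : Multiset Atom) + {some (gmult gs₂)}
            = some (gmult gs₁) ::ₘ some (gmult gs₂) ::ₘ 0 by rfl]
      · exact gch_mem_gmult h1
      · exact gch_mem_gmult h2
  | parS Q _ ih =>
      intro hp
      simp only [nrP, Bool.and_eq_true] at hp
      obtain ⟨G₁, G₂, c, hle, hc1, hc2⟩ := ih hp.1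
      exact ⟨G₁, G₂, c, le_trans hle (Multiset.le_add_right _ _), hc1, hc2⟩
  | resS n _ ih =>
      intro hp
      obtain ⟨G₁, G₂, c, hle, hc1, hc2⟩ := ih hp
      refine ⟨Multiset.map (hideG n) G₁, Multiset.map (hideG n) G₂, hideC n c, ?_, ?_, ?_⟩
      · show _ ≤ hideM n _
        have := Multiset.map_le_map (f := hideA n) hle
        simpa [hideA, hideM] using this
      · exact Multiset.mem_map_of_mem _ hc1
      · exact Multiset.mem_map_of_mem _ hc2
  | congS hc1 _ hc2 ih =>
      intro hp
      have e := cong_sem hc1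
      rw [e.2 hp]
      exact ih (e.1 ▸ hp)

theorem semP_eq (a b : Name) :
    sem (Pterm a b) = some ((true, some a) ::ₘ (false, some a) ::ₘ 0)
      ::ₘ some ((true, some b) ::ₘ (false, some b) ::ₘ 0) ::ₘ 0 := rfl

theorem not_cancom (a b : Name) (hab : a ≠ b) : ¬ CanCom (sem (Pterm a b)) := by
  rintro ⟨G₁, G₂, c, hle, hc1, hc2⟩
  rw [semP_eq] at hle
  set Ga : Multiset GAtom := (true, some a) ::ₘ (false, some a) ::ₘ 0 with hGa
  set Gb : Multiset GAtom := (true, some b) ::ₘ (false, some b) ::ₘ 0 with hGb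
  have hGaGb : Ga ≠ Gb := by
    intro h
    have : ((true, some a) : GAtom) ∈ Gb := h ▸ Multiset.mem_cons_self _ _
    rw [hGb] at this
    simp only [Multiset.mem_cons, Prod.mk.injEq, Option.some.injEq,
      Multiset.notMem_zero, or_false] at this
    rcases this with ⟨-, h'⟩ | ⟨h', -⟩
    · exact hab h'
    · exact Bool.noConfusion h'
  have heq : (some G₁ ::ₘ some G₂ ::ₘ 0 : Multiset Atom) = some Ga ::ₘ some Gb ::ₘ 0 :=
    Multiset.eq_of_le_of_card_le hle (by simp)
  have h1 : (some G₁ : Atom) ∈ (some Ga ::ₘ some Gb ::ₘ 0 : Multiset Atom) :=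
    heq ▸ Multiset.mem_cons_self _ _
  have h2 : (some G₂ : Atom) ∈ (some Ga ::ₘ some Gb ::ₘ 0 : Multiset Atom) :=
    heq ▸ Multiset.mem_cons_of_mem (Multiset.mem_cons_self _ _)
  have fromGa : ∀ pol : Bool, ∀ c' : Option Name, (pol, c') ∈ Ga → c' = some a := by
    intro pol c' h
    rw [hGa] at h
    simp only [Multiset.mem_cons, Prod.mk.injEq, Multiset.notMem_zero, or_false] at h
    tauto
  have fromGb : ∀ pol : Bool, ∀ c' : Option Name, (pol, c') ∈ Gb → c' = some b := by
    intro pol c' h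
    rw [hGb] at h
    simp only [Multiset.mem_cons, Prod.mk.injEq, Multiset.notMem_zero, or_false] at h
    tauto
  simp only [Multiset.mem_cons, Option.some.injEq, Multiset.mem_singleton,
    Multiset.notMem_zero, or_false] at h1 h2
  rcases h1 with rfl | rfl <;> rcases h2 with rfl | rfl
  · -- G₁ = Ga, G₂ = Ga : then heq forces Ga = Gb
    have : (some Gb : Atom) ∈ (some Ga ::ₘ some Ga ::ₘ 0 : Multiset Atom) := by
      rw [heq]; exact Multiset.mem_cons_of_mem (Multiset.mem_cons_self _ _)
    simp only [Multiset.mem_cons, Option.some.injEq, Multiset.notMem_zero,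
      or_false, or_self] at this
    exact hGaGb this.symm
  · -- G₁ = Ga, G₂ = Gb
    have e1 := fromGa _ _ hc1
    have e2 := fromGb _ _ hc2
    rw [e1] at e2
    exact hab (Option.some.inj e2)
  · -- G₁ = Gb, G₂ = Ga
    have e1 := fromGb _ _ hc1
    have e2 := fromGa _ _ hc2
    rw [e1] at e2
    exact hab (Option.some.inj e2.symm)
  · -- G₁ = Gb, G₂ = Gb : heq forces Ga = Gb
    have : (some Ga : Atom) ∈ (some Gb ::ₘ some Gb ::ₘ 0 : Multiset Atom) := by
      rw [heq]; exact Multiset.mem_cons_self _ _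
    simp only [Multiset.mem_cons, Option.some.injEq, Multiset.notMem_zero,
      or_false, or_self] at this
    exact hGaGb this

theorem pterm_no_step (a b : Name) (hab : a ≠ b) : ∀ T, ¬ StepM (Pterm a b) T := by
  intro T h
  exact not_cancom a b hab (step_cancom h rfl)

theorem pterm_no_success (a b : Name) : ¬ HasTopSuccessM (Pterm a b) := by
  rintro ⟨S, hS⟩
  have e := (cong_sem hS).2 rfl
  have hmem : (none : Atom) ∈ sem (Pterm a b) := by
    rw [e]
    show (none : Atom) ∈ sem S + sem PiM.succ
    simp [sem]
  rw [semP_eq] at hmem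
  simp at hmem

theorem not_mayM (a b : Name) (hab : a ≠ b) : ¬ MayM (Pterm a b) := by
  rintro ⟨S', hsteps, hsucc⟩
  rcases Relation.ReflTransGen.cases_head hsteps with rfl | ⟨X, hstep, -⟩
  · exact pterm_no_success a b hsucc
  · exact pterm_no_step a b hab X hstep

end Aux6

/-! STATEMENT 6: For every good encoding and `P ≔ (ā + a) | (b̄ + b.✓)`:
every `T` with `⟦P⟧ ⟹ T` satisfies `T ⇓̸`. -/
theorem good_encoding_P_never_reaches_success
    (a b : Name) (hab : a ≠ b)
    (enc : PiM → PiA) (equiv : PiA → PiA → Prop) (φ : Name → List Name)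
    (hgood : GoodEncoding enc equiv φ) :
    ∀ T : PiA, PiA.Steps (enc (Pterm a b)) T → ¬ PiA.May T := by
  intro T hT hMay
  obtain ⟨T', hTT', hsucc⟩ := hMay
  have hmayEnc : PiA.May (enc (Pterm a b)) := ⟨T', hT.trans hTT', hsucc⟩
  exact not_mayM a b hab ((hgood.successSensitive _).mpr hmayEnc)
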